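/- For every natural number n ≥ 1, the polynomial identity Σ_{k=0}^{n} C(n, k, 0) · X^k = X(X+2)(X+4)⋯(X+2n−2) = ∏_{i=0}^{n−1} (X + 2i) holds in ℤ[X]. -/
import Mathlib


/-- The order `≺` on signed letters: `x ≺ y` iff `|x| < |y|`, or `|x| = |y|` with `x`
barred (negative) and `y` unbarred. -/
def SPrec (x y : ℤ) : Prop := x.natAbs < y.natAbs ∨ (x.natAbs = y.natAbs ∧ x < y)

/-- `w : Fin n → ℤ` is a signed permutation of `n`: each entry has absolute value in
`{1,…,n}` and the absolute values are pairwise distinct (hence a permutation of `1,…,n`);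
in particular every entry is nonzero. -/
def IsSignedPerm {n : ℕ} (w : Fin n → ℤ) : Prop :=
  (∀ t, 1 ≤ (w t).natAbs ∧ (w t).natAbs ≤ n) ∧
    Function.Injective fun t => (w t).natAbs

/-- Position `t` is a left-to-right minimum of `w`: `w t ≺ w s` for all `s < t`. -/
def IsLRMin {n : ℕ} (w : Fin n → ℤ) (t : Fin n) : Prop :=
  ∀ s, s < t → SPrec (w t) (w s)

/-- Position `t` lies in the Lyndon factor beginning at position `m`: `m ≤ t` and no
left-to-right minimum occurs strictly between `m` (exclusive) and `t` (inclusive). -/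
def InFactor {n : ℕ} (w : Fin n → ℤ) (m t : Fin n) : Prop :=
  m ≤ t ∧ ∀ s, m < s → s ≤ t → ¬ IsLRMin w s

/-- The number of barred (negative) entries in the Lyndon factor of `w` beginning at `m`. -/
noncomputable def barredCount {n : ℕ} (w : Fin n → ℤ) (m : Fin n) : ℕ :=
  Nat.card { t : Fin n // InFactor w m t ∧ w t < 0 }

/-- The number of Lyndon factors of `w` with an odd number of barred entries. -/
noncomputable def numOddFactors {n : ℕ} (w : Fin n → ℤ) : ℕ :=
  Nat.card { m : Fin n // IsLRMin w m ∧ Odd (barredCount w m) }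

/-- The number of Lyndon factors of `w` with an even number of barred entries. -/
noncomputable def numEvenFactors {n : ℕ} (w : Fin n → ℤ) : ℕ :=
  Nat.card { m : Fin n // IsLRMin w m ∧ Even (barredCount w m) }

/-- `C(n, k, k̄)`: the number of signed permutations of `n` whose Lyndon factorization has
exactly `k` factors with an odd number of barred entries and exactly `k̄` factors with an
even number of barred entries. -/
noncomputable def bigC (n k kb : ℕ) : ℕ :=
  Nat.card { w : Fin n → ℤ // IsSignedPerm w ∧ numOddFactors w = k ∧ numEvenFactors w = kb }

/-- `c(n, k)`: the signless Stirling number of the first kind, i.e. the number of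
permutations of `(1,…,n)` with exactly `k` left-to-right minima. -/
noncomputable def littleC (n k : ℕ) : ℕ :=
  Nat.card { σ : Equiv.Perm (Fin n) //
    Nat.card { t : Fin n // ∀ s, s < t → σ t < σ s } = k }

namespace BG
open Equiv Finset
open scoped Classical

variable {n : ℕ}

def PMin (σ : Perm (Fin n)) (t : Fin n) : Prop := ∀ s, s < t → σ t < σ s

def InF (σ : Perm (Fin n)) (m t : Fin n) : Prop :=
  m ≤ t ∧ ∀ s, m < s → s ≤ t → ¬ PMin σ s

noncomputable def bc (σ : Perm (Fin n)) (ε : Fin n → Bool) (m : Fin n) : ℕ :=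
  Nat.card {t : Fin n // InF σ m t ∧ ε t = true}

def W (σ : Perm (Fin n)) (ε : Fin n → Bool) : Fin n → ℤ :=
  fun t => (if ε t then -1 else 1) * ((σ t : ℕ) + 1)

lemma W_natAbs (σ : Perm (Fin n)) (ε : Fin n → Bool) (t : Fin n) :
    (W σ ε t).natAbs = (σ t : ℕ) + 1 := by
  unfold W; split <;> simp [Int.natAbs_mul] <;> omega

lemma W_neg_iff (σ : Perm (Fin n)) (ε : Fin n → Bool) (t : Fin n) :
    W σ ε t < 0 ↔ ε t = true := by
  unfold W
  rcases Bool.eq_false_or_eq_true (ε t) with he | he <;> simp [he] <;> omega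

lemma W_sp (σ : Perm (Fin n)) (ε : Fin n → Bool) : IsSignedPerm (W σ ε) := by
  constructor
  · intro t; rw [W_natAbs]; exact ⟨by omega, by have := (σ t).2; omega⟩
  · intro a b hab
    simp only [W_natAbs] at hab
    exact σ.injective (Fin.ext (by omega))

lemma lrmin_W (σ : Perm (Fin n)) (ε : Fin n → Bool) (t : Fin n) :
    IsLRMin (W σ ε) t ↔ PMin σ t := by
  unfold IsLRMin PMin SPrec
  apply forall_congr'; intro s
  apply imp_congr_right; intro hst
  have hne : σ t ≠ σ s := fun h => absurd (σ.injective h) (ne_of_lt hst).symm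
  rw [W_natAbs, W_natAbs]
  constructor
  · rintro (h | ⟨h, _⟩)
    · exact Fin.lt_def.2 (by omega)
    · exact absurd (Fin.ext (by omega : (σ t : ℕ) = σ s)) hne
  · intro h; exact Or.inl (by have := Fin.lt_def.1 h; omega)

lemma inF_W (σ : Perm (Fin n)) (ε : Fin n → Bool) (m t : Fin n) :
    InFactor (W σ ε) m t ↔ InF σ m t := by
  unfold InFactor InF
  simp only [lrmin_W]

lemma bc_W (σ : Perm (Fin n)) (ε : Fin n → Bool) (m : Fin n) :
    barredCount (W σ ε) m = bc σ ε m := by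
  unfold barredCount bc
  apply Nat.card_congr
  apply Equiv.subtypeEquivRight
  intro t; rw [inF_W, W_neg_iff]

lemma numOdd_W (σ : Perm (Fin n)) (ε : Fin n → Bool) :
    numOddFactors (W σ ε) = Nat.card {m : Fin n // PMin σ m ∧ Odd (bc σ ε m)} := by
  unfold numOddFactors
  apply Nat.card_congr
  apply Equiv.subtypeEquivRight
  intro m; rw [lrmin_W, bc_W]

lemma numEven_W (σ : Perm (Fin n)) (ε : Fin n → Bool) :
    numEvenFactors (W σ ε) = Nat.card {m : Fin n // PMin σ m ∧ Even (bc σ ε m)} := by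
  unfold numEvenFactors
  apply Nat.card_congr
  apply Equiv.subtypeEquivRight
  intro m; rw [lrmin_W, bc_W]

noncomputable def Phi : {w : Fin n → ℤ // IsSignedPerm w} ≃ Perm (Fin n) × (Fin n → Bool) where
  toFun w :=
    ⟨Equiv.ofBijective (fun t => (⟨(w.1 t).natAbs - 1, by have := (w.2.1 t); omega⟩ : Fin n))
      ((Finite.injective_iff_bijective).1 (fun a b hab => by
        apply w.2.2
        have h1 := (w.2.1 a).1; have h2 := (w.2.1 b).1
        simp only [Fin.mk.injEq] at hab
        show (w.1 a).natAbs = (w.1 b).natAbs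
        omega)),
     fun t => decide (w.1 t < 0)⟩
  invFun p := ⟨W p.1 p.2, W_sp p.1 p.2⟩
  left_inv w := by
    apply Subtype.ext
    funext t
    show W _ _ t = w.1 t
    unfold W
    simp only [Equiv.ofBijective_apply]
    have h1 := (w.2.1 t).1
    have hne : w.1 t ≠ 0 := fun h => by simp [h] at h1
    rcases lt_or_gt_of_ne hne with h | h
    · rw [if_pos (by simpa using h)]
      have : ((w.1 t).natAbs : ℤ) = -(w.1 t) := by omega
      push_cast
      omega
    · rw [if_neg (by simpa using not_lt.2 (le_of_lt h))]
      have : ((w.1 t).natAbs : ℤ) = w.1 t := by omega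
      push_cast
      omega
  right_inv p := by
    obtain ⟨σ, ε⟩ := p
    simp only [Prod.mk.injEq]
    constructor
    · apply Equiv.ext; intro t
      simp only [Equiv.ofBijective_apply]
      apply Fin.ext
      show (W σ ε t).natAbs - 1 = (σ t : ℕ)
      rw [W_natAbs]; omega
    · funext t
      show decide (W σ ε t < 0) = ε t
      rcases Bool.eq_false_or_eq_true (ε t) with h | h <;>
        simp [h, W_neg_iff σ ε t, ← W_neg_iff σ ε t] <;> simp [W_neg_iff, h]

lemma natCard_subtype {α : Type*} [Fintype α] (p : α → Prop) :
    Nat.card {x // p x} = (univ.filter p).card := by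
  simp [Nat.card_eq_fintype_card, Fintype.card_subtype]

lemma pmin_zero (σ : Perm (Fin n)) (h : 0 < n) : PMin σ ⟨0, h⟩ := by
  intro s hs
  rw [Fin.lt_def] at hs
  simp at hs

noncomputable def bk (σ : Perm (Fin n)) (t : Fin n) : Fin n :=
  (univ.filter (fun m => m ≤ t ∧ PMin σ m)).max'
    ⟨⟨0, t.pos⟩, by
      simp only [mem_filter, mem_univ, true_and]
      exact ⟨by simp [Fin.le_def], pmin_zero σ t.pos⟩⟩

lemma bk_min (σ : Perm (Fin n)) (t : Fin n) : PMin σ (bk σ t) := by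
  have := Finset.max'_mem (univ.filter (fun m => m ≤ t ∧ PMin σ m))
    ⟨⟨0, t.pos⟩, by
      simp only [mem_filter, mem_univ, true_and]
      exact ⟨by simp [Fin.le_def], pmin_zero σ t.pos⟩⟩
  rw [mem_filter] at this
  exact this.2.2

lemma bk_le (σ : Perm (Fin n)) (t : Fin n) : bk σ t ≤ t := by
  have := Finset.max'_mem (univ.filter (fun m => m ≤ t ∧ PMin σ m))
    ⟨⟨0, t.pos⟩, by
      simp only [mem_filter, mem_univ, true_and]
      exact ⟨by simp [Fin.le_def], pmin_zero σ t.pos⟩⟩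
  rw [mem_filter] at this
  exact this.2.1

lemma le_bk (σ : Perm (Fin n)) {m t : Fin n} (h : PMin σ m) (h2 : m ≤ t) : m ≤ bk σ t :=
  Finset.le_max' _ m (by simp [h, h2])

lemma bk_self (σ : Perm (Fin n)) {m : Fin n} (h : PMin σ m) : bk σ m = m :=
  le_antisymm (bk_le σ m) (le_bk σ h le_rfl)

lemma inF_iff (σ : Perm (Fin n)) {m : Fin n} (t : Fin n) (h : PMin σ m) :
    InF σ m t ↔ bk σ t = m := by
  constructor
  · rintro ⟨h1, h2⟩
    by_contra hne
    have hlt : m < bk σ t := lt_of_le_of_ne (le_bk σ h h1) (Ne.symm hne)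
    exact h2 _ hlt (bk_le σ t) (bk_min σ t)
  · rintro rfl
    refine ⟨bk_le σ t, fun s hs1 hs2 hmin => ?_⟩
    exact absurd (le_bk σ hmin hs2) (not_le.2 hs1)

lemma bc_eq (σ : Perm (Fin n)) (ε : Fin n → Bool) {m : Fin n} (h : PMin σ m) :
    bc σ ε m = (univ.filter (fun t => bk σ t = m ∧ ε t = true)).card := by
  rw [bc, Nat.card_congr (Equiv.subtypeEquivRight
    (fun t => and_congr_left' (inF_iff σ t h))), natCard_subtype]
  congr!

lemma bc_split (σ : Perm (Fin n)) (ε : Fin n → Bool) {m : Fin n} (h : PMin σ m) :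
    bc σ ε m = (univ.filter (fun t => ¬ PMin σ t ∧ bk σ t = m ∧ ε t = true)).card
      + (if ε m then 1 else 0) := by
  rw [bc_eq σ ε h]
  have hsplit : (univ.filter (fun t => bk σ t = m ∧ ε t = true))
      = (univ.filter (fun t => ¬ PMin σ t ∧ bk σ t = m ∧ ε t = true))
        ∪ (if ε m then {m} else ∅) := by
    ext t
    simp only [mem_filter, mem_univ, true_and, mem_union]
    constructor
    · rintro ⟨hbk, hε⟩
      by_cases hmin : PMin σ t
      · have : t = m := by rw [← hbk, bk_self σ hmin]
        subst this
        right; simp [hε]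
      · left; exact ⟨hmin, hbk, hε⟩
    · rintro (⟨_, hbk, hε⟩ | hmem)
      · exact ⟨hbk, hε⟩
      · split at hmem
        · rw [mem_singleton] at hmem; subst hmem
          exact ⟨bk_self σ h, by assumption⟩
        · simp at hmem
  rw [hsplit, card_union_of_disjoint]
  · congr 1
    split <;> simp
  · split
    · rw [disjoint_singleton_right]
      simp only [mem_filter]
      intro hmem
      exact hmem.2.1 h
    · exact disjoint_empty_right _
lemma odd_bc_iff (σ : Perm (Fin n)) (ε : Fin n → Bool) {m : Fin n} (h : PMin σ m) :
    Odd (bc σ ε m) ↔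
      ε m = decide (Even (univ.filter (fun t => ¬ PMin σ t ∧ bk σ t = m ∧ ε t = true)).card) := by
  rw [bc_split σ ε h]
  rcases Bool.eq_false_or_eq_true (ε m) with he | he <;>
    simp [he, Nat.odd_iff, Nat.even_iff] <;> omega

lemma filter_congr_eps (σ : Perm (Fin n)) (ε ε' : Fin n → Bool)
    (hagree : ∀ t, ¬ PMin σ t → ε t = ε' t) (m : Fin n) :
    (univ.filter (fun t => ¬ PMin σ t ∧ bk σ t = m ∧ ε t = true))
      = (univ.filter (fun t => ¬ PMin σ t ∧ bk σ t = m ∧ ε' t = true)) := by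
  apply filter_congr
  intro t _
  by_cases hmin : PMin σ t
  · simp [hmin]
  · simp only [hmin, not_false_iff, true_and, hagree t hmin]

/-- extension of `f` by `false` on minima -/
noncomputable def E0 (σ : Perm (Fin n)) (f : {t : Fin n // ¬ PMin σ t} → Bool) : Fin n → Bool :=
  fun s => if h : PMin σ s then false else f ⟨s, h⟩

noncomputable def Ext (σ : Perm (Fin n)) (f : {t : Fin n // ¬ PMin σ t} → Bool) : Fin n → Bool :=
  fun t => if h : PMin σ t then
      decide (Even (univ.filter (fun s => ¬ PMin σ s ∧ bk σ s = t ∧ E0 σ f s = true)).card)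
    else f ⟨t, h⟩

lemma ext_agree (σ : Perm (Fin n)) (f : {t : Fin n // ¬ PMin σ t} → Bool) :
    ∀ t, ¬ PMin σ t → E0 σ f t = Ext σ f t := by
  intro t h; simp [E0, Ext, h]

lemma ext_mem (σ : Perm (Fin n)) (f : {t : Fin n // ¬ PMin σ t} → Bool) :
    ∀ m, PMin σ m → Odd (bc σ (Ext σ f) m) := by
  intro m h
  rw [odd_bc_iff σ _ h]
  rw [← filter_congr_eps σ (E0 σ f) (Ext σ f) (ext_agree σ f) m]
  simp [Ext, h]

noncomputable def signEquiv (σ : Perm (Fin n)) :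
    {ε : Fin n → Bool // ∀ m, PMin σ m → Odd (bc σ ε m)} ≃ ({t : Fin n // ¬ PMin σ t} → Bool) where
  toFun ε t := ε.1 t.1
  invFun f := ⟨Ext σ f, ext_mem σ f⟩
  left_inv := by
    rintro ⟨ε, hε⟩
    apply Subtype.ext
    funext t
    show Ext σ (fun u => ε u.1) t = ε t
    by_cases h : PMin σ t
    · rw [Ext, dif_pos h]
      have h1 : E0 σ (fun u => ε u.1) = fun s => if PMin σ s then false else ε s := by
        funext s; rw [E0]; split <;> simp_all
      have h2 : (univ.filter (fun s => ¬ PMin σ s ∧ bk σ s = t ∧ E0 σ (fun u => ε u.1) s = true))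
          = (univ.filter (fun s => ¬ PMin σ s ∧ bk σ s = t ∧ ε s = true)) := by
        apply filter_congr_eps
        intro s hs; simp [E0, hs]
      rw [h2]
      exact ((odd_bc_iff σ ε h).1 (hε t h)).symm
    · simp [Ext, h]
  right_inv := by
    intro f
    funext t
    show Ext σ f t.1 = f t
    simp [Ext, t.2]

lemma card_allOdd (σ : Perm (Fin n)) :
    Nat.card {ε : Fin n → Bool // ∀ m, PMin σ m → Odd (bc σ ε m)}
      = 2 ^ (n - Nat.card {t : Fin n // PMin σ t}) := by
  rw [Nat.card_congr (signEquiv σ)]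
  simp [Nat.card_eq_fintype_card, Fintype.card_subtype_compl]



noncomputable def cnt (σ : Perm (Fin n)) : ℕ := Nat.card {t : Fin n // PMin σ t}

lemma littleC_eq (n k : ℕ) :
    littleC n k = Nat.card {σ : Perm (Fin n) // cnt σ = k} := rfl

lemma cond_iff (σ : Perm (Fin n)) (ε : Fin n → Bool) (k : ℕ) :
    (Nat.card {m : Fin n // PMin σ m ∧ Odd (bc σ ε m)} = k
       ∧ Nat.card {m : Fin n // PMin σ m ∧ Even (bc σ ε m)} = 0)
    ↔ (cnt σ = k ∧ ∀ m, PMin σ m → Odd (bc σ ε m)) := by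
  constructor
  · rintro ⟨h1, h2⟩
    have he : IsEmpty {m : Fin n // PMin σ m ∧ Even (bc σ ε m)} := by
      rwa [Nat.card_eq_zero, or_iff_left (not_infinite_iff_finite.2 inferInstance)] at h2
    have hall : ∀ m, PMin σ m → Odd (bc σ ε m) := by
      intro m hm
      rcases Nat.even_or_odd (bc σ ε m) with hev | hod
      · exact (he.false ⟨m, hm, hev⟩).elim
      · exact hod
    have key : ∀ m : Fin n, (PMin σ m ∧ Odd (bc σ ε m)) ↔ PMin σ m :=
      fun m => ⟨fun h => h.1, fun h => ⟨h, hall _ h⟩⟩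
    refine ⟨?_, hall⟩
    rw [← h1, cnt]
    exact (Nat.card_congr (Equiv.subtypeEquivRight key)).symm
  · rintro ⟨h1, hall⟩
    have key : ∀ m : Fin n, (PMin σ m ∧ Odd (bc σ ε m)) ↔ PMin σ m :=
      fun m => ⟨fun h => h.1, fun h => ⟨h, hall _ h⟩⟩
    constructor
    · rw [← h1, cnt]
      exact Nat.card_congr (Equiv.subtypeEquivRight key)
    · have : IsEmpty {m : Fin n // PMin σ m ∧ Even (bc σ ε m)} :=
        ⟨fun m => (Nat.not_even_iff_odd.2 (hall m.1 m.2.1)) m.2.2⟩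
      simp

lemma inner_card (σ : Perm (Fin n)) (k : ℕ) :
    Nat.card {ε : Fin n → Bool //
        Nat.card {m : Fin n // PMin σ m ∧ Odd (bc σ ε m)} = k
          ∧ Nat.card {m : Fin n // PMin σ m ∧ Even (bc σ ε m)} = 0}
      = if cnt σ = k then 2 ^ (n - k) else 0 := by
  rw [Nat.card_congr (Equiv.subtypeEquivRight (fun ε => cond_iff σ ε k))]
  by_cases hc : cnt σ = k
  · rw [if_pos hc,
      Nat.card_congr (Equiv.subtypeEquivRight
        (fun ε => (and_iff_right hc : _ ∧ _ ↔ _))),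
      card_allOdd σ, ← cnt, hc]
  · rw [if_neg hc]
    have : IsEmpty {ε : Fin n → Bool //
        cnt σ = k ∧ ∀ m, PMin σ m → Odd (bc σ ε m)} := ⟨fun ε => hc ε.2.1⟩
    simp

lemma bigC_formula (n k : ℕ) : bigC n k 0 = 2 ^ (n - k) * littleC n k := by
  have h1 : bigC n k 0 = Nat.card {y : Perm (Fin n) × (Fin n → Bool) //
      Nat.card {m : Fin n // PMin y.1 m ∧ Odd (bc y.1 y.2 m)} = k ∧
      Nat.card {m : Fin n // PMin y.1 m ∧ Even (bc y.1 y.2 m)} = 0} := by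
    rw [bigC]
    apply Nat.card_congr
    refine ((Equiv.subtypeSubtypeEquivSubtypeInter IsSignedPerm
      (fun w => numOddFactors w = k ∧ numEvenFactors w = 0)).symm.trans ?_).symm.symm
    refine ((Phi.symm.subtypeEquiv (fun y => ?_)).symm : _ ≃ _)
    rw [show ((Phi.symm y).1 : Fin n → ℤ) = W y.1 y.2 from rfl, numOdd_W, numEven_W]
  calc bigC n k 0
      = Nat.card ((σ : Perm (Fin n)) × {ε : Fin n → Bool //
          Nat.card {m : Fin n // PMin σ m ∧ Odd (bc σ ε m)} = k ∧
          Nat.card {m : Fin n // PMin σ m ∧ Even (bc σ ε m)} = 0}) := by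
        rw [h1]
        exact Nat.card_congr (Equiv.subtypeProdEquivSigmaSubtype
          (fun (σ : Perm (Fin n)) (ε : Fin n → Bool) =>
            Nat.card {m : Fin n // PMin σ m ∧ Odd (bc σ ε m)} = k ∧
            Nat.card {m : Fin n // PMin σ m ∧ Even (bc σ ε m)} = 0))
    _ = ∑ σ : Perm (Fin n), Nat.card {ε : Fin n → Bool //
          Nat.card {m : Fin n // PMin σ m ∧ Odd (bc σ ε m)} = k ∧
          Nat.card {m : Fin n // PMin σ m ∧ Even (bc σ ε m)} = 0} := by
        simp [Nat.card_eq_fintype_card, Fintype.card_sigma]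
    _ = ∑ σ : Perm (Fin n), (if cnt σ = k then 2 ^ (n - k) else 0) :=
        Finset.sum_congr rfl (fun σ _ => inner_card σ k)
    _ = (univ.filter (fun σ : Perm (Fin n) => cnt σ = k)).card * 2 ^ (n - k) := by
        rw [Finset.sum_ite, Finset.sum_const, Finset.sum_const]
        simp
    _ = 2 ^ (n - k) * littleC n k := by
        rw [littleC_eq, natCard_subtype, mul_comm]
        congr!


def ins (p : Fin (n+1)) (τ : Perm (Fin n)) : Perm (Fin (n+1)) :=
  (finSuccEquiv' p).trans ((Equiv.optionCongr τ).trans (finSuccEquiv' (Fin.last n)).symm)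

lemma ins_apply_self (p : Fin (n+1)) (τ : Perm (Fin n)) : ins p τ p = Fin.last n := by
  simp [ins, finSuccEquiv'_at, finSuccEquiv'_symm_none]

lemma ins_apply_succAbove (p : Fin (n+1)) (τ : Perm (Fin n)) (s : Fin n) :
    ins p τ (p.succAbove s) = (τ s).castSucc := by
  simp [ins, finSuccEquiv'_succAbove, finSuccEquiv'_symm_some, Fin.succAbove_last]

lemma pmin_ins_self (p : Fin (n+1)) (τ : Perm (Fin n)) : PMin (ins p τ) p ↔ p = 0 := by
  constructor
  · intro h
    by_contra hp
    have h0 : (0 : Fin (n+1)) < p := Fin.pos_of_ne_zero hp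
    have := h 0 h0
    rw [ins_apply_self] at this
    exact absurd this (not_lt.2 (Fin.le_last _))
  · rintro rfl
    intro s hs
    exact absurd hs (by simp)

lemma pmin_ins_succAbove (p : Fin (n+1)) (τ : Perm (Fin n)) (s : Fin n) :
    PMin (ins p τ) (p.succAbove s) ↔ PMin τ s := by
  constructor
  · intro h s' hs'
    have := h (p.succAbove s') (Fin.succAbove_lt_succAbove_iff.2 hs')
    rw [ins_apply_succAbove, ins_apply_succAbove] at this
    exact Fin.castSucc_lt_castSucc_iff.1 this
  · intro h u hu
    rcases eq_or_ne u p with rfl | hup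
    · rw [ins_apply_self, ins_apply_succAbove]
      exact Fin.castSucc_lt_last _
    · obtain ⟨s'', rfl⟩ := Fin.exists_succAbove_eq hup
      rw [ins_apply_succAbove, ins_apply_succAbove]
      exact Fin.castSucc_lt_castSucc_iff.2 (h s'' (Fin.succAbove_lt_succAbove_iff.1 hu))

lemma univ_eq_insert (p : Fin (n+1)) :
    (univ : Finset (Fin (n+1))) = insert p ((univ : Finset (Fin n)).image p.succAbove) := by
  ext u
  simp only [mem_univ, mem_insert, mem_image, true_iff]
  rcases eq_or_ne u p with rfl | h
  · exact Or.inl rfl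
  · obtain ⟨s, rfl⟩ := Fin.exists_succAbove_eq h
    exact Or.inr ⟨s, trivial, rfl⟩

lemma cnt_ins (p : Fin (n+1)) (τ : Perm (Fin n)) :
    cnt (ins p τ) = cnt τ + (if p = 0 then 1 else 0) := by
  rw [cnt, cnt, natCard_subtype, natCard_subtype, univ_eq_insert p, filter_insert]
  have himg : (filter (fun u => PMin (ins p τ) u) (image p.succAbove univ)).card
      = (filter (fun s => PMin τ s) univ).card := by
    rw [filter_image, Finset.card_image_of_injective _ (Fin.succAbove_right_injective)]
    congr 1
    apply filter_congr
    intro s _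
    simp [pmin_ins_succAbove]
  have hnot : p ∉ filter (fun u => PMin (ins p τ) u) (image p.succAbove univ) := by
    intro hmem
    obtain ⟨s, _, hs⟩ := mem_image.1 (mem_filter.1 hmem).1
    exact Fin.succAbove_ne p s hs
  by_cases hp : p = 0
  · rw [if_pos ((pmin_ins_self p τ).2 hp), card_insert_of_notMem hnot, himg, if_pos hp]
  · rw [if_neg (fun h => hp ((pmin_ins_self p τ).1 h)), himg, if_neg hp]
    simp

noncomputable def insEquiv : (Fin (n+1) × Perm (Fin n)) ≃ Perm (Fin (n+1)) :=
  Equiv.ofBijective (fun x => ins x.1 x.2) (by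
    rw [Fintype.bijective_iff_injective_and_card]
    constructor
    · rintro ⟨p, τ⟩ ⟨p', τ'⟩ h
      simp only at h
      have hp : p = p' := by
        have h1 : ins p' τ' p = Fin.last n := by rw [← h]; exact ins_apply_self p τ
        exact (ins p' τ').injective (h1.trans (ins_apply_self p' τ').symm)
      subst hp
      have hτ : τ = τ' := by
        apply Equiv.ext; intro s
        have hcs : (τ s).castSucc = (τ' s).castSucc := by
          rw [← ins_apply_succAbove p τ s, h, ins_apply_succAbove]
        exact Fin.castSucc_injective n hcs
      rw [hτ]
    · simp [Fintype.card_prod, Fintype.card_perm, Fintype.card_fin, Nat.factorial_succ])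

lemma pmin_zero' (σ : Perm (Fin (n+1))) : PMin σ 0 := by
  intro s hs
  exact absurd hs (by simp)

lemma littleC_succ_zero (n : ℕ) : littleC (n+1) 0 = 0 := by
  rw [littleC_eq]
  have : IsEmpty {σ : Perm (Fin (n+1)) // cnt σ = 0} := by
    refine ⟨fun σ => ?_⟩
    have h2 := σ.2
    rw [cnt, Nat.card_eq_zero, or_iff_left (not_infinite_iff_finite.2 inferInstance)] at h2
    exact h2.false ⟨0, pmin_zero' σ.1⟩
  simp

lemma littleC_high {n k : ℕ} (h : n < k) : littleC n k = 0 := by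
  rw [littleC_eq]
  have : IsEmpty {σ : Perm (Fin n) // cnt σ = k} := by
    refine ⟨fun σ => ?_⟩
    have hle : cnt σ.1 ≤ n := by
      have := Fintype.card_subtype_le (PMin σ.1)
      simpa [cnt, Nat.card_eq_fintype_card] using this
    have := σ.2
    omega
  simp

lemma littleC_rec (n k : ℕ) :
    littleC (n+1) (k+1) = littleC n k + n * littleC n (k+1) := by
  calc littleC (n+1) (k+1)
      = Nat.card {x : Fin (n+1) × Perm (Fin n) // cnt (ins x.1 x.2) = k+1} := by
        rw [littleC_eq]
        exact (Nat.card_congr (insEquiv.subtypeEquiv (fun x => Iff.rfl))).symm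
    _ = Nat.card ((p : Fin (n+1)) × {τ : Perm (Fin n) // cnt (ins p τ) = k+1}) :=
        Nat.card_congr (Equiv.subtypeProdEquivSigmaSubtype
          (fun (p : Fin (n+1)) (τ : Perm (Fin n)) => cnt (ins p τ) = k+1))
    _ = ∑ p : Fin (n+1), Nat.card {τ : Perm (Fin n) // cnt (ins p τ) = k+1} := by
        simp [Nat.card_eq_fintype_card, Fintype.card_sigma]
    _ = ∑ p : Fin (n+1), (if p = 0 then littleC n k else littleC n (k+1)) := by
        apply Finset.sum_congr rfl
        intro p _
        by_cases hp : p = 0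
        · rw [if_pos hp, littleC_eq]
          apply Nat.card_congr
          apply Equiv.subtypeEquivRight
          intro τ
          rw [cnt_ins, if_pos hp]
          constructor <;> omega
        · rw [if_neg hp, littleC_eq]
          apply Nat.card_congr
          apply Equiv.subtypeEquivRight
          intro τ
          rw [cnt_ins, if_neg hp]
          constructor <;> omega
    _ = littleC n k + n * littleC n (k+1) := by
        rw [Finset.sum_ite, Finset.sum_const, Finset.sum_const]
        have h1 : (univ.filter (fun p : Fin (n+1) => p = 0)).card = 1 := by
          simp [Finset.filter_eq']
        have h2 : (univ.filter (fun p : Fin (n+1) => ¬ p = 0)).card = n := by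
          have he : (univ.filter (fun p : Fin (n+1) => ¬ p = 0)) = univ.erase 0 := by
            ext u; simp
          rw [he, Finset.card_erase_of_mem (mem_univ _)]
          simp
        rw [h1, h2]
        simp [mul_comm]


lemma bigC_succ_zero (n : ℕ) : bigC (n+1) 0 0 = 0 := by
  rw [bigC_formula, littleC_succ_zero, mul_zero]

lemma bigC_high {n k : ℕ} (h : n < k) : bigC n k 0 = 0 := by
  rw [bigC_formula, littleC_high h, mul_zero]

lemma bigC_rec (n k : ℕ) :
    bigC (n+1) (k+1) 0 = bigC n k 0 + 2 * n * bigC n (k+1) 0 := by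
  rw [bigC_formula, bigC_formula, bigC_formula, littleC_rec]
  by_cases h1 : k + 1 ≤ n
  · have e1 : n + 1 - (k+1) = n - k := by omega
    have e2 : n - k = (n - (k+1)) + 1 := by omega
    rw [e1, e2, pow_succ]
    ring
  · have hz : littleC n (k+1) = 0 := littleC_high (by omega)
    rw [hz]
    by_cases h2 : k = n
    · subst h2; simp
    · have hz2 : littleC n k = 0 := littleC_high (by omega)
      rw [hz2]; simp

lemma bigC_zero_zero : bigC 0 0 0 = 1 := by
  rw [bigC]
  have h1 : ∀ w : Fin 0 → ℤ,
      IsSignedPerm w ∧ numOddFactors w = 0 ∧ numEvenFactors w = 0 := by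
    intro w
    refine ⟨⟨fun t => t.elim0, fun a => a.elim0⟩, ?_, ?_⟩
    · rw [numOddFactors]; simp
    · rw [numEvenFactors]; simp
  rw [Nat.card_congr (Equiv.subtypeUnivEquiv h1)]
  haveI : Unique (Fin 0 → ℤ) := ⟨⟨fun t => t.elim0⟩, fun w => funext fun t => t.elim0⟩
  simp [Nat.card_unique]

end BG

theorem bigC_gen_fun_aux (n : ℕ) :
    ∑ k ∈ Finset.range (n + 1), Polynomial.C (bigC n k 0 : ℤ) * Polynomial.X ^ k =
      ∏ i ∈ Finset.range n, (Polynomial.X + Polynomial.C (2 * (i : ℤ))) := by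
  induction n with
  | zero => simp [BG.bigC_zero_zero]
  | succ n ih =>
    have h0 : (bigC (n+1) 0 0 : ℤ) = 0 := by
      rw [BG.bigC_succ_zero]; simp
    have htop : (bigC n (n+1) 0 : ℤ) = 0 := by
      rw [BG.bigC_high (Nat.lt_succ_self n)]; simp
    have hrec : ∀ k, (bigC (n+1) (k+1) 0 : ℤ)
        = (bigC n k 0 : ℤ) + 2*(n:ℤ)*(bigC n (k+1) 0 : ℤ) := by
      intro k
      rw [BG.bigC_rec n k]
      push_cast
      ring
    have hzero : Polynomial.C (2*(n:ℤ)) * Polynomial.C (bigC n 0 0 : ℤ) = 0 := by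
      cases n with
      | zero => simp
      | succ m => rw [BG.bigC_succ_zero]; simp
    have hshift : ∑ k ∈ Finset.range (n+1), Polynomial.C (bigC n (k+1) 0 : ℤ) * Polynomial.X ^ (k+1)
        = (∑ k ∈ Finset.range (n+1), Polynomial.C (bigC n k 0 : ℤ) * Polynomial.X ^ k)
          - Polynomial.C (bigC n 0 0 : ℤ) := by
      have h1 := Finset.sum_range_succ'
        (fun k => Polynomial.C (bigC n k 0 : ℤ) * Polynomial.X ^ k) (n+1)
      have h2 : ∑ k ∈ Finset.range (n+1+1), Polynomial.C (bigC n k 0 : ℤ) * Polynomial.X ^ k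
          = ∑ k ∈ Finset.range (n+1), Polynomial.C (bigC n k 0 : ℤ) * Polynomial.X ^ k := by
        rw [Finset.sum_range_succ, htop]
        simp
      rw [h2] at h1
      simp only [pow_zero, mul_one] at h1
      rw [eq_comm, sub_eq_iff_eq_add]
      exact h1
    calc ∑ k ∈ Finset.range (n+1+1), Polynomial.C (bigC (n+1) k 0 : ℤ) * Polynomial.X ^ k
        = (∑ k ∈ Finset.range (n+1),
            Polynomial.C (bigC (n+1) (k+1) 0 : ℤ) * Polynomial.X ^ (k+1))
            + Polynomial.C (bigC (n+1) 0 0 : ℤ) * Polynomial.X ^ 0 :=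
          Finset.sum_range_succ' _ (n+1)
      _ = ∑ k ∈ Finset.range (n+1), (Polynomial.C (bigC n k 0 : ℤ)
            + Polynomial.C (2*(n:ℤ)) * Polynomial.C (bigC n (k+1) 0 : ℤ))
              * Polynomial.X ^ (k+1) := by
          rw [h0]
          simp only [map_zero, zero_mul, add_zero]
          apply Finset.sum_congr rfl
          intro k _
          rw [hrec k, map_add, map_mul]
      _ = (∑ k ∈ Finset.range (n+1), Polynomial.C (bigC n k 0 : ℤ) * Polynomial.X ^ k)
            * Polynomial.X
          + Polynomial.C (2*(n:ℤ)) *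
            ∑ k ∈ Finset.range (n+1), Polynomial.C (bigC n (k+1) 0 : ℤ) * Polynomial.X ^ (k+1) := by
          rw [Finset.sum_mul, Finset.mul_sum, ← Finset.sum_add_distrib]
          apply Finset.sum_congr rfl
          intro k _
          ring
      _ = ∏ i ∈ Finset.range (n+1), (Polynomial.X + Polynomial.C (2 * (i : ℤ))) := by
          rw [hshift, mul_sub, hzero, sub_zero, ih, Finset.prod_range_succ]
          push_cast
          ring


/-- for `n ≥ 1`, in `ℤ[X]`:
`Σ_{k=0}^{n} C(n,k,0)·X^k = X(X+2)(X+4)⋯(X+2n−2) = ∏_{i=0}^{n−1}(X+2i)`. -/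
theorem bigC_even_generating_function (n : ℕ) (hn : 1 ≤ n) :
    ∑ k ∈ Finset.range (n + 1), Polynomial.C (bigC n k 0 : ℤ) * Polynomial.X ^ k =
      ∏ i ∈ Finset.range n, (Polynomial.X + Polynomial.C (2 * (i : ℤ))) := by
  exact bigC_gen_fun_aux n
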